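/- Suppose u ∈ ℝ^n satisfies ⟨u, v_j⟩ ∉ ℤ for every j ∈ {1,…,k}. Then π(Φ(u)) lies in the topological interior of the closed zonotope Z̄ = π([0,1]^k) inside the finite-dimensional topological vector space ℝ^k/im(φ). -/

import Mathlib

/-- The linear map `φ : ℝⁿ → ℝᵏ` given by pairing with the integer vectors `v j`. -/
noncomputable def phiMap {n k : ℕ} (v : Fin k → Fin n → ℤ) :
    (Fin n → ℝ) →ₗ[ℝ] (Fin k → ℝ) where
  toFun u := fun j => ∑ i, u i * (v j i : ℝ)
  map_add' u w := by
    funext j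
    simp [add_mul, Finset.sum_add_distrib]
  map_smul' r u := by
    funext j
    simp [Finset.mul_sum, mul_assoc]

/-- The map `Φ : ℝⁿ → ℤᵏ`, `Φ(u)_j = ⌈⟨u, v_j⟩⌉`. -/
noncomputable def PhiMap {n k : ℕ} (v : Fin k → Fin n → ℤ) (u : Fin n → ℝ) : Fin k → ℤ :=
  fun j => ⌈∑ i, u i * (v j i : ℝ)⌉

/-- If `⟨u, v_j⟩ ∉ ℤ` for every `j`, then `π(Φ(u))` lies in the topological interior of the
closed zonotope `Z̄ = π([0,1]ᵏ)` in the quotient space `ℝᵏ/im(φ)`. -/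
theorem stmt14 {n k : ℕ} (v : Fin k → Fin n → ℤ) (u : Fin n → ℝ)
    (h : ∀ j, ¬ ∃ m : ℤ, phiMap v u j = (m : ℝ)) :
    (LinearMap.range (phiMap v)).mkQ (fun j => (PhiMap v u j : ℝ)) ∈
      interior ((LinearMap.range (phiMap v)).mkQ ''
        {x : Fin k → ℝ | ∀ j, x j ∈ Set.Icc (0 : ℝ) 1}) := by
  set S := LinearMap.range (phiMap v)
  set f : Fin k → ℝ := fun j => (PhiMap v u j : ℝ) - phiMap v u j with hf
  have hmem : ∀ j, f j ∈ Set.Ioo (0 : ℝ) 1 := by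
    intro j
    have h1 : phiMap v u j ≤ (PhiMap v u j : ℝ) := Int.le_ceil _
    have h2 : (PhiMap v u j : ℝ) < phiMap v u j + 1 := Int.ceil_lt_add_one _
    have h3 : phiMap v u j ≠ (PhiMap v u j : ℝ) := fun he => h j ⟨PhiMap v u j, he⟩
    constructor
    · simp only [hf]; linarith [lt_of_le_of_ne h1 h3]
    · simp only [hf]; linarith
  -- π(Φ u) = π(f)
  have hker : S.mkQ (phiMap v u) = 0 := by
    rw [Submodule.mkQ_apply, Submodule.Quotient.mk_eq_zero]
    exact LinearMap.mem_range_self _ _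
  have heq : S.mkQ (fun j => (PhiMap v u j : ℝ)) = S.mkQ f := by
    have : (fun j => (PhiMap v u j : ℝ)) = f + phiMap v u := by
      funext j; simp [hf]
    rw [this, map_add, hker, add_zero]
  rw [heq]
  apply mem_interior.2
  refine ⟨S.mkQ '' {x : Fin k → ℝ | ∀ j, x j ∈ Set.Ioo (0 : ℝ) 1}, ?_, ?_, ⟨f, hmem, rfl⟩⟩
  · exact Set.image_mono fun x hx j => Set.Ioo_subset_Icc_self (hx j)
  · apply Submodule.isOpenMap_mkQ
    have : {x : Fin k → ℝ | ∀ j, x j ∈ Set.Ioo (0 : ℝ) 1} =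
        Set.pi Set.univ (fun _ => Set.Ioo (0 : ℝ) 1) := by
      ext x; simp [Set.mem_pi]
    rw [this]
    exact isOpen_set_pi Set.finite_univ fun _ _ => isOpen_Ioo
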